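/- The rational function $Q_4$ satisfies the depth-4 linearized shuffle equation in the first slot: $Q_4(x_1,x_2,x_3,x_4) + Q_4(x_2,x_1,x_3,x_4) + Q_4(x_2,x_3,x_1,x_4) + Q_4(x_2,x_3,x_4,x_1) = 0$, i.e. the sum of $Q_4$ over the four shuffles of the words $\mathsf{x}_1$ and $\mathsf{x}_2\mathsf{x}_3\mathsf{x}_4$ vanishes. -/

import Mathlib

open Finset

/-- The field of rational functions in countably many variables `x₁, x₂, …` over `ℚ`. -/
abbrev K : Type := FractionRing (MvPolynomial ℕ ℚ)

/-- The generic variables: `xg n` is the variable `x_n` in `K`, with the convention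
`x₀ = 0`. -/
noncomputable def xg : ℕ → K := fun n =>
  if n = 0 then 0 else algebraMap (MvPolynomial ℕ ℚ) K (MvPolynomial.X n)

/-- `Q₄(x₁,x₂,x₃,x₄) = ∑_{i ∈ ℤ/5} 1/((x_{i+1}-x_i)(x_{i+3}-x_i)(x_{i+3}-x_{i+2})(x_{i+4}-x_i))`,
indices mod 5, with `x₀ = 0`. -/
noncomputable def Q4 (x : ℕ → K) : K :=
  let y : ℕ → K := fun j => if j % 5 = 0 then 0 else x (j % 5)
  ∑ i ∈ Finset.range 5,
    ((y (i + 1) - y i) * (y (i + 3) - y i) * (y (i + 3) - y (i + 2)) * (y (i + 4) - y i))⁻¹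

/-- Apply a depth-4 function to the variables `x_{n₁}, x_{n₂}, x_{n₃}, x_{n₄}`. -/
noncomputable def Q4at (n : Fin 4 → ℕ) : K :=
  Q4 (fun j => if h : 1 ≤ j ∧ j ≤ 4 then xg (n ⟨j - 1, by omega⟩) else 0)

/-- `Q₄` satisfies the depth-4 linearized shuffle equation in the first slot:
`Q₄(x₁,x₂,x₃,x₄) + Q₄(x₂,x₁,x₃,x₄) + Q₄(x₂,x₃,x₁,x₄) + Q₄(x₂,x₃,x₄,x₁) = 0`,
i.e. the sum of `Q₄` over the four shuffles of `𝗑₁` and `𝗑₂𝗑₃𝗑₄` vanishes. -/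
theorem aux (F : Type*) [Field F] (a b c d : F) (ha : a ≠ 0) (hb : b ≠ 0) (hc : c ≠ 0) (hd : d ≠ 0)
    (h12 : a - b ≠ 0) (h13 : a - c ≠ 0) (h14 : a - d ≠ 0) (h23 : b - c ≠ 0) (h24 : b - d ≠ 0)
    (h34 : c - d ≠ 0) :
    d⁻¹ * ((c - b)⁻¹ * (c⁻¹ * a⁻¹)) + (-((b - a) * (d - a) * (d - c) * a))⁻¹ + (a - b)⁻¹ * (d⁻¹ * (b⁻¹ * (c - b)⁻¹)) + (b - c)⁻¹ * (a⁻¹ * ((a - c)⁻¹ * (d - c)⁻¹)) + (-(d * (b - d) * (b - a) * (c - d)))⁻¹ + (d⁻¹ * ((c - a)⁻¹ * (c⁻¹ * b⁻¹)) + (-((a - b) * (d - b) * (d - c) * b))⁻¹ + (b - a)⁻¹ * (d⁻¹ * (a⁻¹ * (c - a)⁻¹)) + (a - c)⁻¹ * (b⁻¹ * ((b - c)⁻¹ * (d - c)⁻¹)) + (-(d * (a - d) * (a - b) * (c - d)))⁻¹) + (d⁻¹ * ((a - c)⁻¹ * (a⁻¹ * b⁻¹)) + (-((c - b) * (d - b)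 * (d - a) * b))⁻¹ + (b - c)⁻¹ * (d⁻¹ * (c⁻¹ * (a - c)⁻¹)) + (c - a)⁻¹ * (b⁻¹ * ((b - a)⁻¹ * (d - a)⁻¹)) + (-(d * (c - d) * (c - b) * (a - d)))⁻¹) + (a⁻¹ * ((d - c)⁻¹ * (d⁻¹ * b⁻¹)) + (-((c - b) * (a - b) * (a - d) * b))⁻¹ + (b - c)⁻¹ * (a⁻¹ * (c⁻¹ * (d - c)⁻¹)) + (c - d)⁻¹ * (b⁻¹ * ((b - d)⁻¹ * (a - d)⁻¹)) + (-(a * (c - a) * (c - b) * (d - a)))⁻¹) = 0 := by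
  have h21 : b - a ≠ 0 := sub_ne_zero.mpr (Ne.symm (sub_ne_zero.mp h12))
  have h31 : c - a ≠ 0 := sub_ne_zero.mpr (Ne.symm (sub_ne_zero.mp h13))
  have h41 : d - a ≠ 0 := sub_ne_zero.mpr (Ne.symm (sub_ne_zero.mp h14))
  have h32 : c - b ≠ 0 := sub_ne_zero.mpr (Ne.symm (sub_ne_zero.mp h23))
  have h42 : d - b ≠ 0 := sub_ne_zero.mpr (Ne.symm (sub_ne_zero.mp h24))
  have h43 : d - c ≠ 0 := sub_ne_zero.mpr (Ne.symm (sub_ne_zero.mp h34))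
  have hD : a * b * c * d * (a - b) * (a - c) * (a - d) * (b - c) * (b - d) * (c - d) ≠ 0 := by
    exact mul_ne_zero (mul_ne_zero (mul_ne_zero (mul_ne_zero (mul_ne_zero (mul_ne_zero (mul_ne_zero (mul_ne_zero (mul_ne_zero ha hb) hc) hd) h12) h13) h14) h23) h24) h34
  have e1 : d⁻¹ * ((c - b)⁻¹ * (c⁻¹ * a⁻¹)) = (-(b * (a - b) * (a - c) * (a - d) * (b - d) * (c - d))) / (a * b * c * d * (a - b) * (a - c) * (a - d) * (b - c) * (b - d) * (c - d)) := by
    rw [eq_div_iff hD]; field_simp; ring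
  have e2 : (-((b - a) * (d - a) * (d - c) * a))⁻¹ = ((b * c * d * (a - c) * (b - c) * (b - d))) / (a * b * c * d * (a - b) * (a - c) * (a - d) * (b - c) * (b - d) * (c - d)) := by
    rw [eq_div_iff hD]; field_simp; ring
  have e3 : (a - b)⁻¹ * (d⁻¹ * (b⁻¹ * (c - b)⁻¹)) = (-(a * c * (a - c) * (a - d) * (b - d) * (c - d))) / (a * b * c * d * (a - b) * (a - c) * (a - d) * (b - c) * (b - d) * (c - d)) := by
    rw [eq_div_iff hD]; field_simp; ring
  have e4 : (b - c)⁻¹ * (a⁻¹ * ((a - c)⁻¹ * (d - c)⁻¹)) = (-(b * c * d * (a - b) * (a - d) * (b - d))) / (a * b * c * d * (a - b) * (a - c) * (a - d) * (b - c) * (b - d) * (c - d)) := by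
    rw [eq_div_iff hD]; field_simp; ring
  have e5 : (-(d * (b - d) * (b - a) * (c - d)))⁻¹ = ((a * b * c * (a - c) * (a - d) * (b - c))) / (a * b * c * d * (a - b) * (a - c) * (a - d) * (b - c) * (b - d) * (c - d)) := by
    rw [eq_div_iff hD]; field_simp; ring
  have e6 : d⁻¹ * ((c - a)⁻¹ * (c⁻¹ * b⁻¹)) = (-(a * (a - b) * (a - d) * (b - c) * (b - d) * (c - d))) / (a * b * c * d * (a - b) * (a - c) * (a - d) * (b - c) * (b - d) * (c - d)) := by
    rw [eq_div_iff hD]; field_simp; ring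
  have e7 : (-((a - b) * (d - b) * (d - c) * b))⁻¹ = (-(a * c * d * (a - c) * (a - d) * (b - c))) / (a * b * c * d * (a - b) * (a - c) * (a - d) * (b - c) * (b - d) * (c - d)) := by
    rw [eq_div_iff hD]; field_simp; ring
  have e8 : (b - a)⁻¹ * (d⁻¹ * (a⁻¹ * (c - a)⁻¹)) = ((b * c * (a - d) * (b - c) * (b - d) * (c - d))) / (a * b * c * d * (a - b) * (a - c) * (a - d) * (b - c) * (b - d) * (c - d)) := by
    rw [eq_div_iff hD]; field_simp; ring
  have e9 : (a - c)⁻¹ * (b⁻¹ * ((b - c)⁻¹ * (d - c)⁻¹)) = (-(a * c * d * (a - b) * (a - d) * (b - d))) / (a * b * c * d * (a - b) * (a - c) * (a - d) * (b - c) * (b - d) * (c - d)) := by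
    rw [eq_div_iff hD]; field_simp; ring
  have e10 : (-(d * (a - d) * (a - b) * (c - d)))⁻¹ = (-(a * b * c * (a - c) * (b - c) * (b - d))) / (a * b * c * d * (a - b) * (a - c) * (a - d) * (b - c) * (b - d) * (c - d)) := by
    rw [eq_div_iff hD]; field_simp
  have e11 : d⁻¹ * ((a - c)⁻¹ * (a⁻¹ * b⁻¹)) = ((c * (a - b) * (a - d) * (b - c) * (b - d) * (c - d))) / (a * b * c * d * (a - b) * (a - c) * (a - d) * (b - c) * (b - d) * (c - d)) := by
    rw [eq_div_iff hD]; field_simp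
  have e12 : (-((c - b) * (d - b) * (d - a) * b))⁻¹ = ((a * c * d * (a - b) * (a - c) * (c - d))) / (a * b * c * d * (a - b) * (a - c) * (a - d) * (b - c) * (b - d) * (c - d)) := by
    rw [eq_div_iff hD]; field_simp; ring
  have e13 : (b - c)⁻¹ * (d⁻¹ * (c⁻¹ * (a - c)⁻¹)) = ((a * b * (a - b) * (a - d) * (b - d) * (c - d))) / (a * b * c * d * (a - b) * (a - c) * (a - d) * (b - c) * (b - d) * (c - d)) := by
    rw [eq_div_iff hD]; field_simp
  have e14 : (c - a)⁻¹ * (b⁻¹ * ((b - a)⁻¹ * (d - a)⁻¹)) = (-(a * c * d * (b - c) * (b - d) * (c - d))) / (a * b * c * d * (a - b) * (a - c) * (a - d) * (b - c) * (b - d) * (c - d)) := by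
    rw [eq_div_iff hD]; field_simp; ring
  have e15 : (-(d * (c - d) * (c - b) * (a - d)))⁻¹ = ((a * b * c * (a - b) * (a - c) * (b - d))) / (a * b * c * d * (a - b) * (a - c) * (a - d) * (b - c) * (b - d) * (c - d)) := by
    rw [eq_div_iff hD]; field_simp; ring
  have e16 : a⁻¹ * ((d - c)⁻¹ * (d⁻¹ * b⁻¹)) = (-(c * (a - b) * (a - c) * (a - d) * (b - c) * (b - d))) / (a * b * c * d * (a - b) * (a - c) * (a - d) * (b - c) * (b - d) * (c - d)) := by
    rw [eq_div_iff hD]; field_simp; ring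
  have e17 : (-((c - b) * (a - b) * (a - d) * b))⁻¹ = ((a * c * d * (a - c) * (b - d) * (c - d))) / (a * b * c * d * (a - b) * (a - c) * (a - d) * (b - c) * (b - d) * (c - d)) := by
    rw [eq_div_iff hD]; field_simp; ring
  have e18 : (b - c)⁻¹ * (a⁻¹ * (c⁻¹ * (d - c)⁻¹)) = (-(b * d * (a - b) * (a - c) * (a - d) * (b - d))) / (a * b * c * d * (a - b) * (a - c) * (a - d) * (b - c) * (b - d) * (c - d)) := by
    rw [eq_div_iff hD]; field_simp; ring
  have e19 : (c - d)⁻¹ * (b⁻¹ * ((b - d)⁻¹ * (a - d)⁻¹)) = ((a * c * d * (a - b) * (a - c) * (b - c))) / (a * b * c * d * (a - b) * (a - c) * (a - d) * (b - c) * (b - d) * (c - d)) := by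
    rw [eq_div_iff hD]; field_simp
  have e20 : (-(a * (c - a) * (c - b) * (d - a)))⁻¹ = ((b * c * d * (a - b) * (b - d) * (c - d))) / (a * b * c * d * (a - b) * (a - c) * (a - d) * (b - c) * (b - d) * (c - d)) := by
    rw [eq_div_iff hD]; field_simp; ring
  rw [e1, e2, e3, e4, e5, e6, e7, e8, e9, e10, e11, e12, e13, e14, e15, e16, e17, e18, e19, e20]
  simp only [← add_div]
  rw [div_eq_zero_iff]
  left; ring

theorem Q4_linearized_shuffle :
    Q4at ![1, 2, 3, 4] + Q4at ![2, 1, 3, 4] + Q4at ![2, 3, 1, 4] + Q4at ![2, 3, 4, 1] = 0 := by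
  have hinj : Function.Injective (algebraMap (MvPolynomial ℕ ℚ) K) :=
    IsFractionRing.injective _ _
  have hmap : ∀ p : MvPolynomial ℕ ℚ, p ≠ 0 → algebraMap (MvPolynomial ℕ ℚ) K p ≠ 0 :=
    fun p hp h => hp (hinj (by simpa using h))
  have hx : ∀ i : ℕ, i ≠ 0 → xg i ≠ 0 := fun i hi => by
    simp only [xg, if_neg hi]
    exact hmap (MvPolynomial.X i) (MvPolynomial.X_ne_zero i)
  have hsub : ∀ i j : ℕ, i ≠ 0 → j ≠ 0 → i ≠ j → xg i - xg j ≠ 0 := fun i j hi hj hij => by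
    simp only [xg, if_neg hi, if_neg hj, ← map_sub]
    exact hmap _ (sub_ne_zero.mpr fun h => hij (MvPolynomial.X_injective h))
  simp only [Q4at, Q4, Finset.sum_range_succ, Finset.sum_range_zero]
  norm_num
  linear_combination (norm := skip) aux K (xg 1) (xg 2) (xg 3) (xg 4)
    (hx 1 one_ne_zero) (hx 2 (by norm_num)) (hx 3 (by norm_num)) (hx 4 (by norm_num))
    (hsub 1 2 (by norm_num) (by norm_num) (by norm_num))
    (hsub 1 3 (by norm_num) (by norm_num) (by norm_num))
    (hsub 1 4 (by norm_num) (by norm_num) (by norm_num))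
    (hsub 2 3 (by norm_num) (by norm_num) (by norm_num))
    (hsub 2 4 (by norm_num) (by norm_num) (by norm_num))
    (hsub 3 4 (by norm_num) (by norm_num) (by norm_num))
  simp only [show xg 2 - xg 1 = -(xg 1 - xg 2) by ring, show xg 3 - xg 1 = -(xg 1 - xg 3) by ring, show xg 4 - xg 1 = -(xg 1 - xg 4) by ring, show xg 3 - xg 2 = -(xg 2 - xg 3) by ring, show xg 4 - xg 2 = -(xg 2 - xg 4) by ring, show xg 4 - xg 3 = -(xg 3 - xg 4) by ring, mul_inv, inv_neg, neg_mul, mul_neg, neg_neg]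
  ring
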